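/- Let (X, y) satisfy the additive noise model y = m(X) + ε with ε independent of X, E[ε] = 0 and E[ε²] = σ² < ∞, and suppose m(X) is square-integrable. Let m_{−j}(X^{−j}) := E[y | X^{−j}] (= E[m(X) | X^{−j}] a.s.), and let m̂ : ℝ^p → ℝ and m̂_{−j} : ℝ^{p−1} → ℝ be arbitrary square-integrable fitted functions. Then the expected LOCO statistic satisfies E[(y − m̂_{−j}(X^{−j}))²] − E[(y − m̂(X))²] = ψ_TSI(j) + E[(m_{−j}(X^{−j}) − m̂_{−j}(X^{−j}))²] − E[(m(X) − m̂(X))²], where ψ_TSI(j) = E[(m(X) − m_{−j}(X^{−j}))²] is the quadratic-loss Total Sobol Index of coordinate j. -/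

import Mathlib

open MeasureTheory ProbabilityTheory

noncomputable section

lemma aux_mul_integrable {Ω : Type*} [MeasurableSpace Ω] {P : Measure Ω} {u v : Ω → ℝ}
    (hu : MemLp u 2 P) (hv : MemLp v 2 P) :
    Integrable (fun ω => u ω * v ω) P := by
  have h : MemLp (u • v) 1 P := hv.smul hu
    (hpqr := ⟨by simp only [inv_one]; rw [ENNReal.inv_two_add_inv_two]⟩)
  exact memLp_one_iff_integrable.mp h

lemma aux_integral_add_sq {Ω : Type*} [MeasurableSpace Ω] {P : Measure Ω} {u v : Ω → ℝ}
    (hu : MemLp u 2 P) (hv : MemLp v 2 P) :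
    ∫ ω, (u ω + v ω) ^ 2 ∂P
      = (∫ ω, u ω ^ 2 ∂P) + 2 * (∫ ω, u ω * v ω ∂P) + ∫ ω, v ω ^ 2 ∂P := by
  have h1 : Integrable (fun ω => u ω ^ 2) P := hu.integrable_sq
  have h2 : Integrable (fun ω => v ω ^ 2) P := hv.integrable_sq
  have h3 : Integrable (fun ω => u ω * v ω) P := aux_mul_integrable hu hv
  have h5 : Integrable (fun ω => 2 * (u ω * v ω)) P := h3.const_mul 2
  have h4 : Integrable (fun ω => u ω ^ 2 + 2 * (u ω * v ω)) P := h1.add h5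
  have hpt : (fun ω => (u ω + v ω) ^ 2)
      = fun ω => u ω ^ 2 + 2 * (u ω * v ω) + v ω ^ 2 := by
    funext ω; ring
  rw [hpt, integral_add h4 h2, integral_add h1 h5, integral_const_mul]

/-- LOCO bias decomposition, quadratic loss: under the additive noise model
`y = m(X) + ε` with `ε ⟂⟂ X`, `E[ε] = 0`, `E[ε²] < ∞`, with `m_{-j}(X^{-j})` a version of
`E[y | X^{-j}]`, and arbitrary square-integrable fitted functions `m̂`, `m̂_{-j}`, the expected
LOCO statistic equals the Total Sobol Index plus the difference of the two estimation errors. -/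
theorem loco_bias_decomposition
    {Ω : Type*} [MeasurableSpace Ω] (P : Measure Ω) [IsProbabilityMeasure P]
    {p : ℕ} (j : Fin p) (X : Ω → Fin p → ℝ) (hX : Measurable X)
    (y ε : Ω → ℝ)
    (m : (Fin p → ℝ) → ℝ) (hm : Measurable m)
    (hy : ∀ ω, y ω = m (X ω) + ε ω)
    (hεindep : IndepFun ε X P) (hε0 : (∫ ω, ε ω ∂P) = 0) (hε2 : MemLp ε 2 P)
    (hmL2 : MemLp (fun ω => m (X ω)) 2 P)
    (mmj : ({i : Fin p // i ≠ j} → ℝ) → ℝ) (hmmj : Measurable mmj)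
    (hmmjL2 : MemLp (fun ω => mmj (fun i => X ω i.1)) 2 P)
    (hcond : (fun ω => mmj (fun i => X ω i.1)) =ᵐ[P]
      P[y | MeasurableSpace.comap (fun ω (i : {i : Fin p // i ≠ j}) => X ω i.1) inferInstance])
    (mhat : (Fin p → ℝ) → ℝ) (mhatmj : ({i : Fin p // i ≠ j} → ℝ) → ℝ)
    (hmhat : Measurable mhat) (hmhatmj : Measurable mhatmj)
    (hmhatL2 : MemLp (fun ω => mhat (X ω)) 2 P)
    (hmhatmjL2 : MemLp (fun ω => mhatmj (fun i => X ω i.1)) 2 P) :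
    (∫ ω, (y ω - mhatmj (fun i => X ω i.1)) ^ 2 ∂P) - (∫ ω, (y ω - mhat (X ω)) ^ 2 ∂P)
      = (∫ ω, (m (X ω) - mmj (fun i => X ω i.1)) ^ 2 ∂P)
        + (∫ ω, (mmj (fun i => X ω i.1) - mhatmj (fun i => X ω i.1)) ^ 2 ∂P)
        - ∫ ω, (m (X ω) - mhat (X ω)) ^ 2 ∂P := by
  -- restriction map and its measurability
  set π : Ω → ({i : Fin p // i ≠ j} → ℝ) := fun ω (i : {i : Fin p // i ≠ j}) => X ω i.1
    with hπdef
  have hres : Measurable fun (x : Fin p → ℝ) (i : {i : Fin p // i ≠ j}) => x i.1 :=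
    measurable_pi_lambda _ fun i => measurable_pi_apply i.1
  have hπ : Measurable π := hres.comp hX
  have hm_le : MeasurableSpace.comap π inferInstance ≤ (inferInstance : MeasurableSpace Ω) :=
    measurable_iff_comap_le.mp hπ
  have hπ𝔪 : Measurable[MeasurableSpace.comap π inferInstance] π :=
    measurable_iff_comap_le.mpr le_rfl
  -- L2 of y
  have hyL2 : MemLp y 2 P :=
    (hmL2.add hε2).ae_eq (by filter_upwards with ω using (hy ω).symm)
  -- independence: ε ⟂ any measurable function of X
  have hzero : ∀ (φ : (Fin p → ℝ) → ℝ), Measurable φ → MemLp (fun ω => φ (X ω)) 2 P →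
      (∫ ω, ε ω * φ (X ω) ∂P) = 0 := by
    intro φ hφ hφL2
    have hind : IndepFun ε (fun ω => φ (X ω)) P := hεindep.comp measurable_id hφ
    have heq : (∫ ω, ε ω * φ (X ω) ∂P) = (∫ ω, ε ω ∂P) * ∫ ω, φ (X ω) ∂P :=
      hind.integral_fun_mul_eq_mul_integral hε2.aestronglyMeasurable hφL2.aestronglyMeasurable
    rw [heq, hε0, zero_mul]
  -- abbreviations (plain function-valued local defs)
  set G : Ω → ℝ := fun ω => mmj (fun i => X ω i.1) with hGdef
  set H : Ω → ℝ := fun ω => mhatmj (fun i => X ω i.1) with hHdef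
  set q : Ω → ℝ := fun ω => G ω - H ω with hqdef
  set a : Ω → ℝ := fun ω => m (X ω) with hadef
  set F : Ω → ℝ := fun ω => mhat (X ω) with hFdef
  have hqL2 : MemLp q 2 P := hmmjL2.sub hmhatmjL2
  have hq_sm : StronglyMeasurable[MeasurableSpace.comap π inferInstance] q := by
    have h1 : Measurable[MeasurableSpace.comap π inferInstance] G := hmmj.comp hπ𝔪
    have h2 : Measurable[MeasurableSpace.comap π inferInstance] H := hmhatmj.comp hπ𝔪
    exact (h1.sub h2).stronglyMeasurable
  have hqy_int : Integrable (fun ω => q ω * y ω) P := aux_mul_integrable hqL2 hyL2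
  have hqG_int : Integrable (fun ω => q ω * G ω) P := aux_mul_integrable hqL2 hmmjL2
  -- conditional expectation orthogonality
  have horth : (∫ ω, (y ω - G ω) * q ω ∂P) = 0 := by
    have hy_int : Integrable y P := hyL2.integrable one_le_two
    have hmul : P[q * y | MeasurableSpace.comap π inferInstance]
        =ᵐ[P] q * P[y | MeasurableSpace.comap π inferInstance] :=
      condExp_mul_of_stronglyMeasurable_left hq_sm hqy_int hy_int
    have hqG : P[q * y | MeasurableSpace.comap π inferInstance] =ᵐ[P] fun ω => q ω * G ω := by
      filter_upwards [hmul, hcond] with ω h1 h2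
      rw [h1]; simp only [Pi.mul_apply]; rw [← h2]
    have hint1 : (∫ ω, q ω * y ω ∂P) = ∫ ω, q ω * G ω ∂P :=
      calc (∫ ω, q ω * y ω ∂P) = ∫ ω, (q * y) ω ∂P := rfl
        _ = ∫ ω, (P[q * y | MeasurableSpace.comap π inferInstance]) ω ∂P :=
            (integral_condExp (μ := P) (f := q * y) hm_le).symm
        _ = ∫ ω, q ω * G ω ∂P := integral_congr_ae hqG
    have hsub : (fun ω => (y ω - G ω) * q ω) = fun ω => q ω * y ω - q ω * G ω := by
      funext ω; ring
    rw [hsub, integral_sub hqy_int hqG_int, hint1, sub_self]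
  -- cross terms with ε vanish
  have hεH : (∫ ω, ε ω * H ω ∂P) = 0 := hzero (fun x => mhatmj (fun i => x i.1))
    (hmhatmj.comp hres) hmhatmjL2
  have hεF : (∫ ω, ε ω * F ω ∂P) = 0 := hzero mhat hmhat hmhatL2
  have hεa : (∫ ω, ε ω * a ω ∂P) = 0 := hzero m hm hmL2
  have haH : MemLp (fun ω => a ω - H ω) 2 P := hmL2.sub hmhatmjL2
  have haF : MemLp (fun ω => a ω - F ω) 2 P := hmL2.sub hmhatL2
  have haG : MemLp (fun ω => a ω - G ω) 2 P := hmL2.sub hmmjL2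
  have hεaH : (∫ ω, (a ω - H ω) * ε ω ∂P) = 0 := by
    have h1 : Integrable (fun ω => ε ω * a ω) P := aux_mul_integrable hε2 hmL2
    have h2 : Integrable (fun ω => ε ω * H ω) P := aux_mul_integrable hε2 hmhatmjL2
    have hpt : (fun ω => (a ω - H ω) * ε ω) = fun ω => ε ω * a ω - ε ω * H ω := by
      funext ω; ring
    rw [hpt, integral_sub h1 h2, hεa, hεH, sub_self]
  have hεaF : (∫ ω, (a ω - F ω) * ε ω ∂P) = 0 := by
    have h1 : Integrable (fun ω => ε ω * a ω) P := aux_mul_integrable hε2 hmL2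
    have h2 : Integrable (fun ω => ε ω * F ω) P := aux_mul_integrable hε2 hmhatL2
    have hpt : (fun ω => (a ω - F ω) * ε ω) = fun ω => ε ω * a ω - ε ω * F ω := by
      funext ω; ring
    rw [hpt, integral_sub h1 h2, hεa, hεF, sub_self]
  -- expansion 1: ∫ (y - H)² = ∫ (a - H)² + ∫ ε²
  have E1 : (∫ ω, (y ω - H ω) ^ 2 ∂P)
      = (∫ ω, (a ω - H ω) ^ 2 ∂P) + ∫ ω, ε ω ^ 2 ∂P := by
    have hpt : (fun ω => (y ω - H ω) ^ 2) = fun ω => ((a ω - H ω) + ε ω) ^ 2 := by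
      funext ω; rw [hy ω]; ring
    rw [hpt, aux_integral_add_sq haH hε2, hεaH, mul_zero, add_zero]
  -- expansion 2: ∫ (y - F)² = ∫ (a - F)² + ∫ ε²
  have E2 : (∫ ω, (y ω - F ω) ^ 2 ∂P)
      = (∫ ω, (a ω - F ω) ^ 2 ∂P) + ∫ ω, ε ω ^ 2 ∂P := by
    have hpt : (fun ω => (y ω - F ω) ^ 2) = fun ω => ((a ω - F ω) + ε ω) ^ 2 := by
      funext ω; rw [hy ω]; ring
    rw [hpt, aux_integral_add_sq haF hε2, hεaF, mul_zero, add_zero]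
  -- expansion 3 (Pythagoras): ∫ (a - H)² = ∫ (a - G)² + ∫ (G - H)²
  have E3 : (∫ ω, (a ω - H ω) ^ 2 ∂P)
      = (∫ ω, (a ω - G ω) ^ 2 ∂P) + ∫ ω, q ω ^ 2 ∂P := by
    have hcross : (∫ ω, (a ω - G ω) * q ω ∂P) = 0 := by
      have h1 : Integrable (fun ω => (y ω - G ω) * q ω) P :=
        aux_mul_integrable (hyL2.sub hmmjL2) hqL2
      have h2 : Integrable (fun ω => ε ω * q ω) P := aux_mul_integrable hε2 hqL2
      have hεq : (∫ ω, ε ω * q ω ∂P) = 0 :=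
        hzero (fun x => mmj (fun i => x i.1) - mhatmj (fun i => x i.1))
          ((hmmj.comp hres).sub (hmhatmj.comp hres)) (hmmjL2.sub hmhatmjL2)
      have hpt : (fun ω => (a ω - G ω) * q ω)
          = fun ω => (y ω - G ω) * q ω - ε ω * q ω := by
        funext ω
        have hae : a ω = y ω - ε ω := by rw [hy ω]; simp [hadef]
        rw [hae]; ring
      rw [hpt, integral_sub h1 h2, horth, hεq, sub_self]
    have hpt : (fun ω => (a ω - H ω) ^ 2) = fun ω => ((a ω - G ω) + q ω) ^ 2 := by
      funext ω; simp only [hqdef]; ring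
    rw [hpt, aux_integral_add_sq haG hqL2, hcross, mul_zero, add_zero]
  -- conclude
  linarith

end
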